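/- Let c₁, c₂ ∈ ℝ² be the centers of two obstacle circles with radii r₁, r₂ ≥ 0, and let d > 0 be the diameter of the robot's circumscribed circle. If the grouping condition ‖c₁ − c₂‖ < d + r₁ + r₂ holds, then the robot cannot pass between the obstacles: for every point p on the segment joining c₁ and c₂, the closed ball of center p and radius d/2 intersects the closed ball of center c₁ and radius r₁ or the closed ball of center c₂ and radius r₂. -/

import Mathlib

lemma closedBall_inter_nonempty {E : Type*} [NormedAddCommGroup E] [NormedSpace ℝ E]
    (x y : E) (a b : ℝ) (ha : 0 ≤ a) (hb : 0 ≤ b) (h : dist x y ≤ a + b) :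
    (Metric.closedBall x a ∩ Metric.closedBall y b).Nonempty := by
  rcases eq_or_lt_of_le (add_nonneg ha hb) with h0 | h0
  · refine ⟨x, Metric.mem_closedBall.2 (by simp [ha]), Metric.mem_closedBall.2 ?_⟩
    have hcomm : dist y x = dist x y := dist_comm y x
    linarith [dist_nonneg (x := x) (y := y)]
  · refine ⟨x + (a / (a + b)) • (y - x), ?_, ?_⟩
    · rw [Metric.mem_closedBall, dist_eq_norm]
      have : x + (a / (a + b)) • (y - x) - x = (a / (a + b)) • (y - x) := by module
      rw [this, norm_smul, Real.norm_eq_abs, abs_of_nonneg (by positivity)]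
      rw [dist_eq_norm] at h
      calc a / (a + b) * ‖y - x‖ ≤ a / (a + b) * (a + b) := by
            have := norm_sub_rev y x ▸ h
            exact mul_le_mul_of_nonneg_left (by rw [norm_sub_rev]; exact h) (by positivity)
        _ = a := by field_simp
    · rw [Metric.mem_closedBall, dist_eq_norm]
      have : x + (a / (a + b)) • (y - x) - y = (1 - a / (a + b)) • (x - y) := by
        module
      rw [this, norm_smul, Real.norm_eq_abs]
      have h1 : 1 - a / (a + b) = b / (a + b) := by field_simp; ring
      rw [h1, abs_of_nonneg (by positivity)]
      rw [dist_eq_norm] at h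
      calc b / (a + b) * ‖x - y‖ ≤ b / (a + b) * (a + b) :=
            mul_le_mul_of_nonneg_left h (by positivity)
        _ = b := by field_simp

/-- Grouping condition: if the distance between the two obstacle centers satisfies
`‖c₁ - c₂‖ < d + r₁ + r₂`, where `d > 0` is the diameter of the robot's circumscribed
circle, then the robot cannot pass between the obstacles: for every point `p` on the
segment joining the centers, the closed ball of center `p` and radius `d/2` meets the
closed ball around `c₁` of radius `r₁` or the closed ball around `c₂` of radius `r₂`. -/
theorem grouped_obstacles_robot_blocked
    (c₁ c₂ : EuclideanSpace ℝ (Fin 2)) (r₁ r₂ d : ℝ)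
    (hr₁ : 0 ≤ r₁) (hr₂ : 0 ≤ r₂) (hd : 0 < d)
    (hgroup : ‖c₁ - c₂‖ < d + r₁ + r₂) :
    ∀ p ∈ segment ℝ c₁ c₂,
      (Metric.closedBall p (d / 2) ∩ Metric.closedBall c₁ r₁).Nonempty ∨
      (Metric.closedBall p (d / 2) ∩ Metric.closedBall c₂ r₂).Nonempty := by
  intro p hp
  have hsum : dist c₁ p + dist p c₂ = dist c₁ c₂ := by
    rcases hp with ⟨a, b, ha, hb, hab, rfl⟩
    rw [dist_eq_norm, dist_eq_norm, dist_eq_norm]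
    have hb1 : b = 1 - a := by linarith
    subst hb1
    have h1 : c₁ - (a • c₁ + (1 - a) • c₂) = (1 - a) • (c₁ - c₂) := by module
    have h2 : a • c₁ + (1 - a) • c₂ - c₂ = a • (c₁ - c₂) := by module
    rw [h1, h2, norm_smul, norm_smul, Real.norm_eq_abs, Real.norm_eq_abs,
      abs_of_nonneg ha, abs_of_nonneg hb, ← add_mul]
    ring_nf
  have hd12 : dist c₁ c₂ < d + r₁ + r₂ := by rw [dist_eq_norm]; exact hgroup
  by_cases h1 : dist p c₁ ≤ d / 2 + r₁
  · exact Or.inl (closedBall_inter_nonempty p c₁ (d / 2) r₁ (by linarith) hr₁ h1)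
  · right
    apply closedBall_inter_nonempty p c₂ (d / 2) r₂ (by linarith) hr₂
    push_neg at h1
    rw [dist_comm c₁ p] at hsum
    linarith
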